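/- Let S be a nonnegative real (n+1)×(n+1) matrix and C a real n×n matrix with s_{ij} ≥ |c_{ij}| for all 1 ≤ i,j ≤ n. Let 0 ≤ γ ≤ 1 and choose nonnegative reals φ⁽¹⁾_{n+1,i}, φ⁽²⁾_{n+1,i} with φ⁽¹⁾_{n+1,i} + φ⁽²⁾_{n+1,i} = s_{n+1,i} for i = 1,…,n. Then the (2n+1)×(2n+1) matrix M_γ built with 2×2 blocks [[ (s_{ij}+γc_{ij})/2, (s_{ij}−γc_{ij})/2 ],[ (s_{ij}−γc_{ij})/2, (s_{ij}+γc_{ij})/2 ]] for 1 ≤ i,j ≤ n, last column entries given by duplicating s_{i,n+1}, last row given by the φ-values, and (2n+1,2n+1) entry s_{n+1,n+1}, is nonnegative with eigenvalue multiset σ(S) ∪ γ·σ(C). -/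

import Mathlib

open Matrix Polynomial

/-- Roots of the charpoly of a scalar multiple, over ℂ. -/
lemma stmt12_roots_smul {m : Type*} [Fintype m] [DecidableEq m]
    (γ : ℂ) (A : Matrix m m ℂ) :
    ((γ • A).charpoly).roots = A.charpoly.roots.map (fun z => γ * z) := by
  classical
  have hsp : ∀ B : Matrix m m ℂ,
      B.charpoly = (B.charpoly.roots.map fun a => X - Polynomial.C a).prod := fun B =>
    (IsAlgClosed.splits _).eq_prod_roots_of_monic B.charpoly_monic
  have hcard : Multiset.card A.charpoly.roots = Fintype.card m := by
    rw [splits_iff_card_roots.mp (IsAlgClosed.splits _),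
      Matrix.charpoly_natDegree_eq_dim]
  by_cases hγ : γ = 0
  · subst hγ
    rw [zero_smul]
    have hz : (0 : Matrix m m ℂ).charpoly = X ^ Fintype.card m := by
      unfold Matrix.charpoly charmatrix
      simp [Matrix.scalar_apply, Matrix.det_diagonal]
    rw [hz]
    simp only [zero_mul]
    rw [Multiset.map_const']
    simp [Polynomial.roots_pow, Polynomial.roots_X, hcard, Multiset.nsmul_singleton]
  · set ψ : ℂ[X] →+* ℂ[X] := eval₂RingHom Polynomial.C (Polynomial.C γ⁻¹ * X) with hψ
    have hcm : charmatrix (γ • A) = (Polynomial.C γ) • ((charmatrix A).map ψ) := by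
      ext i j
      by_cases hij : i = j
      · subst hij
        simp only [charmatrix_apply_eq, Matrix.smul_apply, Matrix.map_apply, Matrix.smul_apply,
          smul_eq_mul, hψ, coe_eval₂RingHom, eval₂_sub, eval₂_X, eval₂_C]
        rw [mul_sub, ← mul_assoc, ← C_mul, mul_inv_cancel₀ hγ, C_1, one_mul, ← C_mul]
      · simp only [charmatrix_apply_ne _ _ _ hij, Matrix.smul_apply, Matrix.map_apply,
          smul_eq_mul, hψ, coe_eval₂RingHom, eval₂_neg, eval₂_C, mul_neg, ← C_mul]
    have key : (γ • A).charpoly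
        = (A.charpoly.roots.map fun a => X - Polynomial.C (γ * a)).prod := by
      rw [Matrix.charpoly, hcm, det_smul, ← RingHom.mapMatrix_apply, ← RingHom.map_det, ← Matrix.charpoly]
      conv_lhs => rw [hsp A]
      rw [map_multiset_prod, Multiset.map_map]
      have h1 : ∀ a : ℂ, ψ (X - Polynomial.C a) = Polynomial.C γ⁻¹ * X - Polynomial.C a := by
        intro a; simp [hψ]
      simp only [Function.comp, h1]
      rw [← hcard, ← Multiset.prod_replicate, ← Multiset.map_const']
      rw [← Multiset.prod_map_mul]
      congr 1
      apply Multiset.map_congr rfl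
      intro a _
      rw [mul_sub, ← mul_assoc, ← C_mul, mul_inv_cancel₀ hγ, C_1, one_mul, ← C_mul]
    rw [key, show (A.charpoly.roots.map fun a => X - Polynomial.C (γ * a))
        = ((A.charpoly.roots.map fun z => γ * z).map fun a => X - Polynomial.C a) from by
      rw [Multiset.map_map]; rfl, roots_multiset_prod_X_sub_C]

/-- Similar (via a one-sided inverse pair) matrices have equal charpoly. -/
lemma stmt12_charpoly_conj {R : Type*} [CommRing R] {m k : Type*}
    [Fintype m] [Fintype k] [DecidableEq m] [DecidableEq k]
    (e : k ≃ m) (M : Matrix m m R) (D : Matrix k k R)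
    (Q : Matrix m k R) (Rm : Matrix k m R)
    (hQR : Q * Rm = 1) (hMQ : M * Q = Q * D) :
    M.charpoly = D.charpoly := by
  classical
  let D' : Matrix m m R := (reindex e e) D
  let Q' : Matrix m m R := (reindex (Equiv.refl m) e) Q
  let R' : Matrix m m R := (reindex e (Equiv.refl m)) Rm
  have hQR' : Q' * R' = 1 := by
    ext x y
    have : (Q' * R') x y = (Q * Rm) x y := by
      simp only [Matrix.mul_apply, Q', R', reindex_apply, submatrix_apply, Equiv.refl_symm,
        Equiv.refl_apply]
      exact Fintype.sum_equiv e.symm _ _ (fun z => rfl)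
    rw [this, hQR]
  have hMQ' : M * Q' = Q' * D' := by
    ext x y
    have h1 : (M * Q') x y = (M * Q) x (e.symm y) := by
      simp [Matrix.mul_apply, Q']
    have h2 : (Q' * D') x y = (Q * D) x (e.symm y) := by
      simp only [Matrix.mul_apply, Q', D', reindex_apply, submatrix_apply, Equiv.refl_symm,
        Equiv.refl_apply]
      exact Fintype.sum_equiv e.symm _ _ (fun z => rfl)
    rw [h1, h2, hMQ]
  -- now the square case
  have hM : M = Q' * D' * R' := by
    calc M = M * (Q' * R') := by rw [hQR', mul_one]
    _ = (M * Q') * R' := by rw [Matrix.mul_assoc]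
    _ = Q' * D' * R' := by rw [hMQ']
  let Cc : R →+* R[X] := Polynomial.C
  have hmap1 : (Q' * R').map Cc = (1 : Matrix m m R[X]) := by
    rw [hQR', Matrix.map_one Cc (map_zero Cc) (map_one Cc)]
  have hcm : charmatrix M = (Q'.map Cc) * charmatrix D' * (R'.map Cc) := by
    unfold charmatrix
    have hscal : (Q'.map Cc) * Matrix.scalar m (X : R[X]) * (R'.map Cc)
        = Matrix.scalar m (X : R[X]) := by
      have h1 : (Q'.map Cc) * Matrix.scalar m (X : R[X])
          = Matrix.scalar m (X : R[X]) * (Q'.map Cc) := by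
        ext x y
        rw [Matrix.scalar_apply, Matrix.mul_diagonal, Matrix.diagonal_mul, mul_comm]
      rw [h1, Matrix.mul_assoc, ← Matrix.map_mul, hmap1]
      simp
    rw [Matrix.mul_sub, Matrix.sub_mul, hscal]
    congr 1
    rw [hM]
    simp only [RingHom.mapMatrix_apply]
    rw [Matrix.map_mul, Matrix.map_mul, Matrix.mul_assoc]
  have hdet : (Q'.map Cc).det * (R'.map Cc).det = 1 := by
    rw [← Matrix.det_mul, ← Matrix.map_mul, hmap1, Matrix.det_one]
  have : M.charpoly = D'.charpoly := by
    rw [Matrix.charpoly, hcm, Matrix.det_mul, Matrix.det_mul, Matrix.charpoly]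
    ring_nf
    calc (Q'.map Cc).det * D'.charpoly * (R'.map Cc).det
        = ((Q'.map Cc).det * (R'.map Cc).det) * D'.charpoly := by ring
      _ = D'.charpoly := by rw [hdet, one_mul]
  rw [this, Matrix.charpoly_reindex]

/-- The index equivalence `Fin n ⊕ Unit ≃ Fin (n+1)`. -/
def stmt12e (n : ℕ) : (Fin n ⊕ Unit) ≃ Fin (n + 1) where
  toFun := Sum.elim Fin.castSucc fun _ => Fin.last n
  invFun k := if h : (k : ℕ) < n then Sum.inl ⟨k, h⟩ else Sum.inr ()
  left_inv := by
    rintro (i | u)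
    · simp [i.isLt]
    · simp
  right_inv := by
    intro k
    by_cases h : (k : ℕ) < n
    · simp [h]
    · simp only [h, dif_neg, not_false_iff, Sum.elim_inr]
      apply Fin.ext
      simp only [Fin.val_last]
      omega

theorem stmt12 (n : ℕ) (S : Matrix (Fin (n + 1)) (Fin (n + 1)) ℝ)
    (hSnn : ∀ i j, 0 ≤ S i j)
    (C : Matrix (Fin n) (Fin n) ℝ)
    (h : ∀ i j : Fin n, |C i j| ≤ S i.castSucc j.castSucc)
    (γ : ℝ) (h0 : 0 ≤ γ) (h1 : γ ≤ 1)
    (φ : Fin n → Fin 2 → ℝ) (hφnn : ∀ i p, 0 ≤ φ i p)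
    (hφ : ∀ i, φ i 0 + φ i 1 = S (Fin.last n) i.castSucc)
    (M : Matrix (Fin n × Fin 2 ⊕ Unit) (Fin n × Fin 2 ⊕ Unit) ℝ)
    (hM1 : ∀ (i j : Fin n) (p q : Fin 2),
      M (Sum.inl (i, p)) (Sum.inl (j, q)) =
        if p = q then (S i.castSucc j.castSucc + γ * C i j) / 2
        else (S i.castSucc j.castSucc - γ * C i j) / 2)
    (hM2 : ∀ (i : Fin n) (p : Fin 2) (u : Unit),
      M (Sum.inl (i, p)) (Sum.inr u) = S i.castSucc (Fin.last n))
    (hM3 : ∀ (u : Unit) (j : Fin n) (q : Fin 2),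
      M (Sum.inr u) (Sum.inl (j, q)) = φ j q)
    (hM4 : ∀ u v : Unit, M (Sum.inr u) (Sum.inr v) = S (Fin.last n) (Fin.last n)) :
    (∀ u v, 0 ≤ M u v) ∧
      (M.map Complex.ofReal).charpoly.roots =
        (S.map Complex.ofReal).charpoly.roots +
          Multiset.map (fun z => (γ : ℂ) * z)
            ((C.map Complex.ofReal).charpoly.roots) := by
  classical
  have hγC : ∀ i j : Fin n, |γ * C i j| ≤ S i.castSucc j.castSucc := by
    intro i j
    rw [abs_mul, abs_of_nonneg h0]
    calc γ * |C i j| ≤ 1 * |C i j| :=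
          mul_le_mul_of_nonneg_right h1 (abs_nonneg _)
      _ = |C i j| := one_mul _
      _ ≤ _ := h i j
  have hnn : ∀ u v, 0 ≤ M u v := by
    rintro (⟨i, p⟩ | u) (⟨j, q⟩ | v)
    · rw [hM1]
      obtain ⟨hl, hr⟩ := abs_le.mp (hγC i j)
      split_ifs <;> linarith
    · rw [hM2]; exact hSnn _ _
    · rw [hM3]; exact hφnn _ _
    · rw [hM4]; exact hSnn _ _
  refine ⟨hnn, ?_⟩
  -- the block-diagonalizing matrices
  set Qm : Matrix (Fin n × Fin 2 ⊕ Unit) ((Fin n ⊕ Unit) ⊕ Fin n) ℝ :=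
    fun x y => match x, y with
    | .inl (i, _), .inl (.inl j) => if i = j then 1 else 0
    | .inl _, .inl (.inr _) => 0
    | .inl (i, p), .inr j => if i = j then (if p = 0 then 1 else -1) else 0
    | .inr _, .inl (.inl _) => 0
    | .inr _, .inl (.inr _) => 1
    | .inr _, .inr _ => 0
    with hQdef
  set Rm : Matrix ((Fin n ⊕ Unit) ⊕ Fin n) (Fin n × Fin 2 ⊕ Unit) ℝ :=
    fun y x => match y, x with
    | .inl (.inl i), .inl (j, _) => if i = j then 1/2 else 0
    | .inl (.inl _), .inr _ => 0
    | .inl (.inr _), .inl _ => 0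
    | .inl (.inr _), .inr _ => 1
    | .inr i, .inl (j, q) => if i = j then (if q = 0 then 1/2 else -(1/2)) else 0
    | .inr _, .inr _ => 0
    with hRdef
  set Bm : Matrix (Fin n ⊕ Unit) (Fin n) ℝ :=
    fun a j => match a with
    | .inl _ => 0
    | .inr _ => φ j 0 - φ j 1
    with hBdef
  set Dm : Matrix ((Fin n ⊕ Unit) ⊕ Fin n) ((Fin n ⊕ Unit) ⊕ Fin n) ℝ :=
    Matrix.fromBlocks (S.submatrix (stmt12e n) (stmt12e n)) Bm 0 (γ • C) with hDdef
  -- the equivalence (Fin n ⊕ Unit) ⊕ Fin n ≃ Fin n × Fin 2 ⊕ Unit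
  let ee : ((Fin n ⊕ Unit) ⊕ Fin n) ≃ (Fin n × Fin 2 ⊕ Unit) :=
  { toFun := fun x => match x with
      | .inl (.inl i) => .inl (i, 0)
      | .inl (.inr _) => .inr ()
      | .inr i => .inl (i, 1)
    invFun := fun x => match x with
      | .inl (i, p) => if p = 0 then .inl (.inl i) else .inr i
      | .inr _ => .inl (.inr ())
    left_inv := by rintro ((i | u) | i) <;> simp
    right_inv := by
      rintro (⟨i, p⟩ | u)
      · fin_cases p <;> simp
      · simp }
  have hQR : Qm * Rm = 1 := by
    ext x y
    rcases x with ⟨i, p⟩ | u <;> rcases y with ⟨j, q⟩ | v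
    · simp only [Matrix.mul_apply, Fintype.sum_sum_type, Fintype.sum_prod_type]
      by_cases hij : i = j
      · subst hij
        fin_cases p <;> fin_cases q <;>
          simp [hQdef, hRdef, Matrix.one_apply, Finset.sum_ite_eq, Finset.sum_ite_eq'] <;> norm_num
      · simp [hQdef, hRdef, Matrix.one_apply, hij, Finset.sum_ite_eq, Finset.sum_ite_eq']
    · simp only [Matrix.mul_apply, Fintype.sum_sum_type]
      simp [Matrix.mul_apply, Fintype.sum_sum_type, hQdef, hRdef, Matrix.one_apply,
        Finset.sum_ite_eq, Finset.sum_ite_eq']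
    · simp only [Matrix.mul_apply, Fintype.sum_sum_type]
      simp [Matrix.mul_apply, Fintype.sum_sum_type, hQdef, hRdef, Matrix.one_apply,
        Finset.sum_ite_eq, Finset.sum_ite_eq']
    · simp only [Matrix.mul_apply, Fintype.sum_sum_type]
      simp [Matrix.mul_apply, Fintype.sum_sum_type, hQdef, hRdef, Matrix.one_apply]
  have hMQ : M * Qm = Qm * Dm := by
    ext x y
    rcases x with ⟨i, p⟩ | u
    · rcases y with (j | v) | j
      · -- column u_j
        have hl : (M * Qm) (Sum.inl (i, p)) (Sum.inl (Sum.inl j))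
            = S i.castSucc j.castSucc := by
          rw [Matrix.mul_apply]
          rw [Fintype.sum_sum_type]
          simp only [Fintype.sum_prod_type]
          simp [hQdef, Finset.sum_ite_eq, Finset.sum_ite_eq', Fin.sum_univ_two, hM1, hM2]
          fin_cases p <;> simp <;> ring
        have hr : (Qm * Dm) (Sum.inl (i, p)) (Sum.inl (Sum.inl j))
            = S i.castSucc j.castSucc := by
          rw [Matrix.mul_apply, Fintype.sum_sum_type, Fintype.sum_sum_type]
          simp [hQdef, hDdef, Finset.sum_ite_eq, Finset.sum_ite_eq', stmt12e]
        rw [hl, hr]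
      · -- column w
        have hl : (M * Qm) (Sum.inl (i, p)) (Sum.inl (Sum.inr v))
            = S i.castSucc (Fin.last n) := by
          rw [Matrix.mul_apply, Fintype.sum_sum_type]
          simp [hQdef, Fintype.sum_prod_type, hM2]
        have hr : (Qm * Dm) (Sum.inl (i, p)) (Sum.inl (Sum.inr v))
            = S i.castSucc (Fin.last n) := by
          rw [Matrix.mul_apply, Fintype.sum_sum_type, Fintype.sum_sum_type]
          simp [hQdef, hDdef, Finset.sum_ite_eq, Finset.sum_ite_eq', stmt12e]
        rw [hl, hr]
      · -- column v_j
        have hl : (M * Qm) (Sum.inl (i, p)) (Sum.inr j)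
            = (if p = 0 then 1 else -1) * (γ * C i j) := by
          rw [Matrix.mul_apply, Fintype.sum_sum_type]
          simp only [Fintype.sum_prod_type]
          simp [hQdef, Finset.sum_ite_eq, Finset.sum_ite_eq', Fin.sum_univ_two, hM1]
          fin_cases p <;> simp <;> ring
        have hr : (Qm * Dm) (Sum.inl (i, p)) (Sum.inr j)
            = (if p = 0 then 1 else -1) * (γ * C i j) := by
          rw [Matrix.mul_apply, Fintype.sum_sum_type, Fintype.sum_sum_type]
          simp [hQdef, hDdef, hBdef, Finset.sum_ite_eq, Finset.sum_ite_eq', fromBlocks_apply₁₂, fromBlocks_apply₂₂]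
          exact (zero_add (if p = 0 then γ * C i j else -(γ * C i j)) :)
        rw [hl, hr]
    · rcases y with (j | v) | j
      · have hl : (M * Qm) (Sum.inr u) (Sum.inl (Sum.inl j))
            = S (Fin.last n) j.castSucc := by
          rw [Matrix.mul_apply, Fintype.sum_sum_type]
          simp only [Fintype.sum_prod_type]
          simp [hQdef, Finset.sum_ite_eq, Finset.sum_ite_eq', Fin.sum_univ_two, hM3]
          rw [← hφ j]
        have hr : (Qm * Dm) (Sum.inr u) (Sum.inl (Sum.inl j))
            = S (Fin.last n) j.castSucc := by
          rw [Matrix.mul_apply, Fintype.sum_sum_type, Fintype.sum_sum_type]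
          simp [hQdef, hDdef, stmt12e]
        rw [hl, hr]
      · have hl : (M * Qm) (Sum.inr u) (Sum.inl (Sum.inr v))
            = S (Fin.last n) (Fin.last n) := by
          rw [Matrix.mul_apply, Fintype.sum_sum_type]
          simp [hQdef, Fintype.sum_prod_type, hM4]
        have hr : (Qm * Dm) (Sum.inr u) (Sum.inl (Sum.inr v))
            = S (Fin.last n) (Fin.last n) := by
          rw [Matrix.mul_apply, Fintype.sum_sum_type, Fintype.sum_sum_type]
          simp [hQdef, hDdef, stmt12e]
        rw [hl, hr]
      · have hl : (M * Qm) (Sum.inr u) (Sum.inr j) = φ j 0 - φ j 1 := by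
          rw [Matrix.mul_apply, Fintype.sum_sum_type]
          simp only [Fintype.sum_prod_type]
          simp [hQdef, Finset.sum_ite_eq, Finset.sum_ite_eq', Fin.sum_univ_two, hM3]
          ring
        have hr : (Qm * Dm) (Sum.inr u) (Sum.inr j) = φ j 0 - φ j 1 := by
          rw [Matrix.mul_apply, Fintype.sum_sum_type, Fintype.sum_sum_type]
          simp [hQdef, hDdef, hBdef, fromBlocks_apply₁₂, fromBlocks_apply₂₂]
          rfl
        rw [hl, hr]
  have hchar : M.charpoly = S.charpoly * (γ • C).charpoly := by
    have := stmt12_charpoly_conj ee M Dm Qm Rm hQR hMQ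
    rw [this, hDdef, Matrix.charpoly_fromBlocks_zero₂₁]
    congr 1
    have : S.submatrix (stmt12e n) (stmt12e n)
        = (reindex (stmt12e n).symm (stmt12e n).symm) S := by
      simp [reindex_apply]
    rw [this, Matrix.charpoly_reindex]
  -- pass to ℂ
  have hmapgen : ∀ {k : Type} [Fintype k] [DecidableEq k] (A : Matrix k k ℝ),
      (A.map Complex.ofReal).charpoly = A.charpoly.map Complex.ofRealHom := by
    intro k _ _ A
    exact Matrix.charpoly_map A Complex.ofRealHom
  have hsm : (γ • C).map Complex.ofReal = (γ : ℂ) • (C.map Complex.ofReal) := by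
    ext i j
    simp [Complex.ofReal_mul]
  have hmapM : (M.map Complex.ofReal).charpoly
      = (S.map Complex.ofReal).charpoly * ((γ : ℂ) • (C.map Complex.ofReal)).charpoly := by
    rw [hmapgen M, hchar, Polynomial.map_mul, ← hmapgen S, ← hmapgen (γ • C), hsm]
  rw [hmapM, Polynomial.roots_mul, stmt12_roots_smul]
  exact mul_ne_zero (Matrix.charpoly_monic _).ne_zero (Matrix.charpoly_monic _).ne_zero
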